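/- Let f : ℝ⁸ → 𝕆 be differentiable with components f = Σⱼ₌₀⁷ fⱼ eⱼ. Then for every octonion constant α the function x ↦ f(αx) is left 𝕆-analytic (i.e., Σᵢ eᵢ ∂/∂xᵢ applied to it vanishes) if and only if the components satisfy: ∂f₀/∂x₀ = Σᵢ₌₁⁷ ∂fᵢ/∂xᵢ, ∂f₀/∂xᵢ = −∂fᵢ/∂x₀ for 1 ≤ i ≤ 7, and ∂fⱼ/∂x_k = ∂f_k/∂xⱼ for 1 ≤ j < k ≤ 7 (equivalently, the components of the conjugate f̄ form a Stein–Weiss conjugate harmonic system on ℝ⁸). -/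

import Mathlib

open scoped Quaternion

noncomputable section

def Octonion : Type := Quaternion ℝ × Quaternion ℝ

namespace Octonion

instance : AddCommGroup Octonion := inferInstanceAs (AddCommGroup (Quaternion ℝ × Quaternion ℝ))
instance : Module ℝ Octonion := inferInstanceAs (Module ℝ (Quaternion ℝ × Quaternion ℝ))
instance : NormedAddCommGroup Octonion :=
  inferInstanceAs (NormedAddCommGroup (Quaternion ℝ × Quaternion ℝ))
instance : NormedSpace ℝ Octonion :=
  inferInstanceAs (NormedSpace ℝ (Quaternion ℝ × Quaternion ℝ))

def fst (x : Octonion) : Quaternion ℝ := Prod.fst x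
def snd (x : Octonion) : Quaternion ℝ := Prod.snd x

instance : One Octonion := ⟨((1 : ℍ[ℝ]), (0 : ℍ[ℝ]))⟩
instance : Mul Octonion :=
  ⟨fun x y => (fst x * fst y - star (snd y) * snd x, snd y * fst x + snd x * star (fst y))⟩

def conj (x : Octonion) : Octonion := (star (fst x), -(snd x))
def re (x : Octonion) : ℝ := (fst x).re
def normSq (x : Octonion) : ℝ := ‖fst x‖ ^ 2 + ‖snd x‖ ^ 2
def coord (x : Octonion) : Fin 8 → ℝ :=
  ![(fst x).re, (fst x).imI, (fst x).imJ, (fst x).imK,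
    (snd x).re, (snd x).imI, (snd x).imJ, (snd x).imK]
def e (i : Fin 8) : Octonion :=
  let v : Fin 8 → ℝ := Pi.single i 1
  ((⟨v 0, v 1, v 2, v 3⟩ : ℍ[ℝ]), (⟨v 4, v 5, v 6, v 7⟩ : ℍ[ℝ]))
def im (i : Fin 7) (x : Octonion) : ℝ := coord x i.succ
def et (t : Fin 7 → ℝ) : Octonion := ∑ i : Fin 7, t i • e i.succ

-- auxiliary definitions and lemmas
def mk8 (a : Fin 8 → ℝ) : Octonion :=
  ((⟨a 0, a 1, a 2, a 3⟩ : ℍ[ℝ]), (⟨a 4, a 5, a 6, a 7⟩ : ℍ[ℝ]))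

lemma mk8_coord (x : Octonion) : mk8 (coord x) = x := rfl

lemma mul_def (x y : Octonion) : x * y =
    ((fst x * fst y - star (snd y) * snd x, snd y * fst x + snd x * star (fst y)) : ℍ[ℝ] × ℍ[ℝ]) := rfl

lemma add_mk8 (a b : Fin 8 → ℝ) : mk8 a + mk8 b =
    mk8 ![a 0 + b 0, a 1 + b 1, a 2 + b 2, a 3 + b 3, a 4 + b 4, a 5 + b 5, a 6 + b 6, a 7 + b 7] := rfl
lemma smul_mk8 (r : ℝ) (a : Fin 8 → ℝ) : r • mk8 a =
    mk8 ![r * a 0, r * a 1, r * a 2, r * a 3, r * a 4, r * a 5, r * a 6, r * a 7] := rfl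
lemma neg_mk8 (a : Fin 8 → ℝ) : -mk8 a =
    mk8 ![-a 0, -a 1, -a 2, -a 3, -a 4, -a 5, -a 6, -a 7] := rfl

lemma v8_0 {α : Type*} (a0 a1 a2 a3 a4 a5 a6 a7 : α) : ![a0,a1,a2,a3,a4,a5,a6,a7] (0 : Fin 8) = a0 := rfl
lemma v8_1 {α : Type*} (a0 a1 a2 a3 a4 a5 a6 a7 : α) : ![a0,a1,a2,a3,a4,a5,a6,a7] (1 : Fin 8) = a1 := rfl
lemma v8_2 {α : Type*} (a0 a1 a2 a3 a4 a5 a6 a7 : α) : ![a0,a1,a2,a3,a4,a5,a6,a7] (2 : Fin 8) = a2 := rfl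
lemma v8_3 {α : Type*} (a0 a1 a2 a3 a4 a5 a6 a7 : α) : ![a0,a1,a2,a3,a4,a5,a6,a7] (3 : Fin 8) = a3 := rfl
lemma v8_4 {α : Type*} (a0 a1 a2 a3 a4 a5 a6 a7 : α) : ![a0,a1,a2,a3,a4,a5,a6,a7] (4 : Fin 8) = a4 := rfl
lemma v8_5 {α : Type*} (a0 a1 a2 a3 a4 a5 a6 a7 : α) : ![a0,a1,a2,a3,a4,a5,a6,a7] (5 : Fin 8) = a5 := rfl
lemma v8_6 {α : Type*} (a0 a1 a2 a3 a4 a5 a6 a7 : α) : ![a0,a1,a2,a3,a4,a5,a6,a7] (6 : Fin 8) = a6 := rfl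
lemma v8_7 {α : Type*} (a0 a1 a2 a3 a4 a5 a6 a7 : α) : ![a0,a1,a2,a3,a4,a5,a6,a7] (7 : Fin 8) = a7 := rfl

lemma coord_mk8 (a : Fin 8 → ℝ) : coord (mk8 a) = ![a 0, a 1, a 2, a 3, a 4, a 5, a 6, a 7] := rfl

lemma mk8_eq_mk8 (a b : Fin 8 → ℝ) : mk8 a = mk8 b ↔
    (a 0 = b 0 ∧ a 1 = b 1 ∧ a 2 = b 2 ∧ a 3 = b 3 ∧ a 4 = b 4 ∧ a 5 = b 5 ∧ a 6 = b 6 ∧ a 7 = b 7) := by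
  constructor
  · intro h
    refine ⟨congrArg (fun x => coord x 0) h, congrArg (fun x => coord x 1) h,
      congrArg (fun x => coord x 2) h, congrArg (fun x => coord x 3) h,
      congrArg (fun x => coord x 4) h, congrArg (fun x => coord x 5) h,
      congrArg (fun x => coord x 6) h, congrArg (fun x => coord x 7) h⟩
  · rintro ⟨h0,h1,h2,h3,h4,h5,h6,h7⟩
    show Prod.mk _ _ = Prod.mk _ _
    rw [h0,h1,h2,h3,h4,h5,h6,h7]

lemma mk8_eq_zero (a : Fin 8 → ℝ) : mk8 a = 0 ↔
    (a 0 = 0 ∧ a 1 = 0 ∧ a 2 = 0 ∧ a 3 = 0 ∧ a 4 = 0 ∧ a 5 = 0 ∧ a 6 = 0 ∧ a 7 = 0) := by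
  have : (0 : Octonion) = mk8 (fun _ => 0) := rfl
  rw [this, mk8_eq_mk8]

lemma mk8_fst_re (a : Fin 8 → ℝ) : (fst (mk8 a)).re = a 0 := rfl
lemma mk8_fst_imI (a : Fin 8 → ℝ) : (fst (mk8 a)).imI = a 1 := rfl
lemma mk8_fst_imJ (a : Fin 8 → ℝ) : (fst (mk8 a)).imJ = a 2 := rfl
lemma mk8_fst_imK (a : Fin 8 → ℝ) : (fst (mk8 a)).imK = a 3 := rfl
lemma mk8_snd_re (a : Fin 8 → ℝ) : (snd (mk8 a)).re = a 4 := rfl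
lemma mk8_snd_imI (a : Fin 8 → ℝ) : (snd (mk8 a)).imI = a 5 := rfl
lemma mk8_snd_imJ (a : Fin 8 → ℝ) : (snd (mk8 a)).imJ = a 6 := rfl
lemma mk8_snd_imK (a : Fin 8 → ℝ) : (snd (mk8 a)).imK = a 7 := rfl

lemma mk8_mul (a b : Fin 8 → ℝ) : mk8 a * mk8 b = mk8
    ![a 0*b 0 - a 1*b 1 - a 2*b 2 - a 3*b 3 - a 4*b 4 - a 5*b 5 - a 6*b 6 - a 7*b 7,
      a 0*b 1 + a 1*b 0 + a 2*b 3 - a 3*b 2 + a 4*b 5 - a 5*b 4 - a 6*b 7 + a 7*b 6,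
      a 0*b 2 - a 1*b 3 + a 2*b 0 + a 3*b 1 + a 4*b 6 + a 5*b 7 - a 6*b 4 - a 7*b 5,
      a 0*b 3 + a 1*b 2 - a 2*b 1 + a 3*b 0 + a 4*b 7 - a 5*b 6 + a 6*b 5 - a 7*b 4,
      a 0*b 4 - a 1*b 5 - a 2*b 6 - a 3*b 7 + a 4*b 0 + a 5*b 1 + a 6*b 2 + a 7*b 3,
      a 0*b 5 + a 1*b 4 - a 2*b 7 + a 3*b 6 - a 4*b 1 + a 5*b 0 - a 6*b 3 + a 7*b 2,
      a 0*b 6 + a 1*b 7 + a 2*b 4 - a 3*b 5 - a 4*b 2 + a 5*b 3 + a 6*b 0 - a 7*b 1,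
      a 0*b 7 - a 1*b 6 + a 2*b 5 + a 3*b 4 - a 4*b 3 - a 5*b 2 + a 6*b 1 + a 7*b 0] := by
  rw [mul_def]
  show Prod.mk _ _ = Prod.mk _ _
  refine Prod.ext ?_ ?_ <;>
    · refine Quaternion.ext _ _ ?_ ?_ ?_ ?_ <;>
      simp only [mk8_fst_re, mk8_fst_imI, mk8_fst_imJ, mk8_fst_imK, mk8_snd_re, mk8_snd_imI,
        mk8_snd_imJ, mk8_snd_imK, v8_0, v8_1, v8_2, v8_3, v8_4, v8_5, v8_6, v8_7, Quaternion.re_mul, Quaternion.imI_mul, Quaternion.imJ_mul,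
        Quaternion.imK_mul, Quaternion.re_sub, Quaternion.imI_sub, Quaternion.imJ_sub,
        Quaternion.imK_sub, Quaternion.re_add, Quaternion.imI_add, Quaternion.imJ_add,
        Quaternion.imK_add, Quaternion.re_star, Quaternion.imI_star, Quaternion.imJ_star,
        Quaternion.imK_star] <;>
      ring

lemma fmk0 (h : 0 < 8) : (⟨0, h⟩ : Fin 8) = 0 := rfl
lemma fmk1 (h : 1 < 8) : (⟨1, h⟩ : Fin 8) = 1 := rfl
lemma fmk2 (h : 2 < 8) : (⟨2, h⟩ : Fin 8) = 2 := rfl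
lemma fmk3 (h : 3 < 8) : (⟨3, h⟩ : Fin 8) = 3 := rfl
lemma fmk4 (h : 4 < 8) : (⟨4, h⟩ : Fin 8) = 4 := rfl
lemma fmk5 (h : 5 < 8) : (⟨5, h⟩ : Fin 8) = 5 := rfl
lemma fmk6 (h : 6 < 8) : (⟨6, h⟩ : Fin 8) = 6 := rfl
lemma fmk7 (h : 7 < 8) : (⟨7, h⟩ : Fin 8) = 7 := rfl

lemma e_mk8_0 : e 0 = mk8 ![1, 0, 0, 0, 0, 0, 0, 0] := by
  rw [show e 0 = mk8 (Pi.single (0 : Fin 8) 1) from rfl, mk8_eq_mk8]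
  norm_num [Pi.single_apply, v8_0, v8_1, v8_2, v8_3, v8_4, v8_5, v8_6, v8_7]
  decide

lemma e_mk8_1 : e 1 = mk8 ![0, 1, 0, 0, 0, 0, 0, 0] := by
  rw [show e 1 = mk8 (Pi.single (1 : Fin 8) 1) from rfl, mk8_eq_mk8]
  norm_num [Pi.single_apply, v8_0, v8_1, v8_2, v8_3, v8_4, v8_5, v8_6, v8_7]
  decide

lemma e_mk8_2 : e 2 = mk8 ![0, 0, 1, 0, 0, 0, 0, 0] := by
  rw [show e 2 = mk8 (Pi.single (2 : Fin 8) 1) from rfl, mk8_eq_mk8]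
  norm_num [Pi.single_apply, v8_0, v8_1, v8_2, v8_3, v8_4, v8_5, v8_6, v8_7]
  decide

lemma e_mk8_3 : e 3 = mk8 ![0, 0, 0, 1, 0, 0, 0, 0] := by
  rw [show e 3 = mk8 (Pi.single (3 : Fin 8) 1) from rfl, mk8_eq_mk8]
  norm_num [Pi.single_apply, v8_0, v8_1, v8_2, v8_3, v8_4, v8_5, v8_6, v8_7]
  decide

lemma e_mk8_4 : e 4 = mk8 ![0, 0, 0, 0, 1, 0, 0, 0] := by
  rw [show e 4 = mk8 (Pi.single (4 : Fin 8) 1) from rfl, mk8_eq_mk8]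
  norm_num [Pi.single_apply, v8_0, v8_1, v8_2, v8_3, v8_4, v8_5, v8_6, v8_7]
  decide

lemma e_mk8_5 : e 5 = mk8 ![0, 0, 0, 0, 0, 1, 0, 0] := by
  rw [show e 5 = mk8 (Pi.single (5 : Fin 8) 1) from rfl, mk8_eq_mk8]
  norm_num [Pi.single_apply, v8_0, v8_1, v8_2, v8_3, v8_4, v8_5, v8_6, v8_7]
  decide

lemma e_mk8_6 : e 6 = mk8 ![0, 0, 0, 0, 0, 0, 1, 0] := by
  rw [show e 6 = mk8 (Pi.single (6 : Fin 8) 1) from rfl, mk8_eq_mk8]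
  norm_num [Pi.single_apply, v8_0, v8_1, v8_2, v8_3, v8_4, v8_5, v8_6, v8_7]
  decide

lemma e_mk8_7 : e 7 = mk8 ![0, 0, 0, 0, 0, 0, 0, 1] := by
  rw [show e 7 = mk8 (Pi.single (7 : Fin 8) 1) from rfl, mk8_eq_mk8]
  norm_num [Pi.single_apply, v8_0, v8_1, v8_2, v8_3, v8_4, v8_5, v8_6, v8_7]
  decide

lemma etab_0_0 : e 0 * e 0 = e 0 := by
  simp only [e_mk8_0, e_mk8_1, e_mk8_2, e_mk8_3, e_mk8_4, e_mk8_5, e_mk8_6, e_mk8_7, mk8_mul, neg_mk8, mk8_eq_mk8, v8_0, v8_1, v8_2, v8_3, v8_4, v8_5, v8_6, v8_7]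
  norm_num

lemma etab_0_1 : e 0 * e 1 = e 1 := by
  simp only [e_mk8_0, e_mk8_1, e_mk8_2, e_mk8_3, e_mk8_4, e_mk8_5, e_mk8_6, e_mk8_7, mk8_mul, neg_mk8, mk8_eq_mk8, v8_0, v8_1, v8_2, v8_3, v8_4, v8_5, v8_6, v8_7]
  norm_num

lemma etab_0_2 : e 0 * e 2 = e 2 := by
  simp only [e_mk8_0, e_mk8_1, e_mk8_2, e_mk8_3, e_mk8_4, e_mk8_5, e_mk8_6, e_mk8_7, mk8_mul, neg_mk8, mk8_eq_mk8, v8_0, v8_1, v8_2, v8_3, v8_4, v8_5, v8_6, v8_7]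
  norm_num

lemma etab_0_3 : e 0 * e 3 = e 3 := by
  simp only [e_mk8_0, e_mk8_1, e_mk8_2, e_mk8_3, e_mk8_4, e_mk8_5, e_mk8_6, e_mk8_7, mk8_mul, neg_mk8, mk8_eq_mk8, v8_0, v8_1, v8_2, v8_3, v8_4, v8_5, v8_6, v8_7]
  norm_num

lemma etab_0_4 : e 0 * e 4 = e 4 := by
  simp only [e_mk8_0, e_mk8_1, e_mk8_2, e_mk8_3, e_mk8_4, e_mk8_5, e_mk8_6, e_mk8_7, mk8_mul, neg_mk8, mk8_eq_mk8, v8_0, v8_1, v8_2, v8_3, v8_4, v8_5, v8_6, v8_7]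
  norm_num

lemma etab_0_5 : e 0 * e 5 = e 5 := by
  simp only [e_mk8_0, e_mk8_1, e_mk8_2, e_mk8_3, e_mk8_4, e_mk8_5, e_mk8_6, e_mk8_7, mk8_mul, neg_mk8, mk8_eq_mk8, v8_0, v8_1, v8_2, v8_3, v8_4, v8_5, v8_6, v8_7]
  norm_num

lemma etab_0_6 : e 0 * e 6 = e 6 := by
  simp only [e_mk8_0, e_mk8_1, e_mk8_2, e_mk8_3, e_mk8_4, e_mk8_5, e_mk8_6, e_mk8_7, mk8_mul, neg_mk8, mk8_eq_mk8, v8_0, v8_1, v8_2, v8_3, v8_4, v8_5, v8_6, v8_7]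
  norm_num

lemma etab_0_7 : e 0 * e 7 = e 7 := by
  simp only [e_mk8_0, e_mk8_1, e_mk8_2, e_mk8_3, e_mk8_4, e_mk8_5, e_mk8_6, e_mk8_7, mk8_mul, neg_mk8, mk8_eq_mk8, v8_0, v8_1, v8_2, v8_3, v8_4, v8_5, v8_6, v8_7]
  norm_num

lemma etab_1_0 : e 1 * e 0 = e 1 := by
  simp only [e_mk8_0, e_mk8_1, e_mk8_2, e_mk8_3, e_mk8_4, e_mk8_5, e_mk8_6, e_mk8_7, mk8_mul, neg_mk8, mk8_eq_mk8, v8_0, v8_1, v8_2, v8_3, v8_4, v8_5, v8_6, v8_7]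
  norm_num

lemma etab_1_1 : e 1 * e 1 = -e 0 := by
  simp only [e_mk8_0, e_mk8_1, e_mk8_2, e_mk8_3, e_mk8_4, e_mk8_5, e_mk8_6, e_mk8_7, mk8_mul, neg_mk8, mk8_eq_mk8, v8_0, v8_1, v8_2, v8_3, v8_4, v8_5, v8_6, v8_7]
  norm_num

lemma etab_1_2 : e 1 * e 2 = e 3 := by
  simp only [e_mk8_0, e_mk8_1, e_mk8_2, e_mk8_3, e_mk8_4, e_mk8_5, e_mk8_6, e_mk8_7, mk8_mul, neg_mk8, mk8_eq_mk8, v8_0, v8_1, v8_2, v8_3, v8_4, v8_5, v8_6, v8_7]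
  norm_num

lemma etab_1_3 : e 1 * e 3 = -e 2 := by
  simp only [e_mk8_0, e_mk8_1, e_mk8_2, e_mk8_3, e_mk8_4, e_mk8_5, e_mk8_6, e_mk8_7, mk8_mul, neg_mk8, mk8_eq_mk8, v8_0, v8_1, v8_2, v8_3, v8_4, v8_5, v8_6, v8_7]
  norm_num

lemma etab_1_4 : e 1 * e 4 = e 5 := by
  simp only [e_mk8_0, e_mk8_1, e_mk8_2, e_mk8_3, e_mk8_4, e_mk8_5, e_mk8_6, e_mk8_7, mk8_mul, neg_mk8, mk8_eq_mk8, v8_0, v8_1, v8_2, v8_3, v8_4, v8_5, v8_6, v8_7]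
  norm_num

lemma etab_1_5 : e 1 * e 5 = -e 4 := by
  simp only [e_mk8_0, e_mk8_1, e_mk8_2, e_mk8_3, e_mk8_4, e_mk8_5, e_mk8_6, e_mk8_7, mk8_mul, neg_mk8, mk8_eq_mk8, v8_0, v8_1, v8_2, v8_3, v8_4, v8_5, v8_6, v8_7]
  norm_num

lemma etab_1_6 : e 1 * e 6 = -e 7 := by
  simp only [e_mk8_0, e_mk8_1, e_mk8_2, e_mk8_3, e_mk8_4, e_mk8_5, e_mk8_6, e_mk8_7, mk8_mul, neg_mk8, mk8_eq_mk8, v8_0, v8_1, v8_2, v8_3, v8_4, v8_5, v8_6, v8_7]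
  norm_num

lemma etab_1_7 : e 1 * e 7 = e 6 := by
  simp only [e_mk8_0, e_mk8_1, e_mk8_2, e_mk8_3, e_mk8_4, e_mk8_5, e_mk8_6, e_mk8_7, mk8_mul, neg_mk8, mk8_eq_mk8, v8_0, v8_1, v8_2, v8_3, v8_4, v8_5, v8_6, v8_7]
  norm_num

lemma etab_2_0 : e 2 * e 0 = e 2 := by
  simp only [e_mk8_0, e_mk8_1, e_mk8_2, e_mk8_3, e_mk8_4, e_mk8_5, e_mk8_6, e_mk8_7, mk8_mul, neg_mk8, mk8_eq_mk8, v8_0, v8_1, v8_2, v8_3, v8_4, v8_5, v8_6, v8_7]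
  norm_num

lemma etab_2_1 : e 2 * e 1 = -e 3 := by
  simp only [e_mk8_0, e_mk8_1, e_mk8_2, e_mk8_3, e_mk8_4, e_mk8_5, e_mk8_6, e_mk8_7, mk8_mul, neg_mk8, mk8_eq_mk8, v8_0, v8_1, v8_2, v8_3, v8_4, v8_5, v8_6, v8_7]
  norm_num

lemma etab_2_2 : e 2 * e 2 = -e 0 := by
  simp only [e_mk8_0, e_mk8_1, e_mk8_2, e_mk8_3, e_mk8_4, e_mk8_5, e_mk8_6, e_mk8_7, mk8_mul, neg_mk8, mk8_eq_mk8, v8_0, v8_1, v8_2, v8_3, v8_4, v8_5, v8_6, v8_7]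
  norm_num

lemma etab_2_3 : e 2 * e 3 = e 1 := by
  simp only [e_mk8_0, e_mk8_1, e_mk8_2, e_mk8_3, e_mk8_4, e_mk8_5, e_mk8_6, e_mk8_7, mk8_mul, neg_mk8, mk8_eq_mk8, v8_0, v8_1, v8_2, v8_3, v8_4, v8_5, v8_6, v8_7]
  norm_num

lemma etab_2_4 : e 2 * e 4 = e 6 := by
  simp only [e_mk8_0, e_mk8_1, e_mk8_2, e_mk8_3, e_mk8_4, e_mk8_5, e_mk8_6, e_mk8_7, mk8_mul, neg_mk8, mk8_eq_mk8, v8_0, v8_1, v8_2, v8_3, v8_4, v8_5, v8_6, v8_7]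
  norm_num

lemma etab_2_5 : e 2 * e 5 = e 7 := by
  simp only [e_mk8_0, e_mk8_1, e_mk8_2, e_mk8_3, e_mk8_4, e_mk8_5, e_mk8_6, e_mk8_7, mk8_mul, neg_mk8, mk8_eq_mk8, v8_0, v8_1, v8_2, v8_3, v8_4, v8_5, v8_6, v8_7]
  norm_num

lemma etab_2_6 : e 2 * e 6 = -e 4 := by
  simp only [e_mk8_0, e_mk8_1, e_mk8_2, e_mk8_3, e_mk8_4, e_mk8_5, e_mk8_6, e_mk8_7, mk8_mul, neg_mk8, mk8_eq_mk8, v8_0, v8_1, v8_2, v8_3, v8_4, v8_5, v8_6, v8_7]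
  norm_num

lemma etab_2_7 : e 2 * e 7 = -e 5 := by
  simp only [e_mk8_0, e_mk8_1, e_mk8_2, e_mk8_3, e_mk8_4, e_mk8_5, e_mk8_6, e_mk8_7, mk8_mul, neg_mk8, mk8_eq_mk8, v8_0, v8_1, v8_2, v8_3, v8_4, v8_5, v8_6, v8_7]
  norm_num

lemma etab_3_0 : e 3 * e 0 = e 3 := by
  simp only [e_mk8_0, e_mk8_1, e_mk8_2, e_mk8_3, e_mk8_4, e_mk8_5, e_mk8_6, e_mk8_7, mk8_mul, neg_mk8, mk8_eq_mk8, v8_0, v8_1, v8_2, v8_3, v8_4, v8_5, v8_6, v8_7]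
  norm_num

lemma etab_3_1 : e 3 * e 1 = e 2 := by
  simp only [e_mk8_0, e_mk8_1, e_mk8_2, e_mk8_3, e_mk8_4, e_mk8_5, e_mk8_6, e_mk8_7, mk8_mul, neg_mk8, mk8_eq_mk8, v8_0, v8_1, v8_2, v8_3, v8_4, v8_5, v8_6, v8_7]
  norm_num

lemma etab_3_2 : e 3 * e 2 = -e 1 := by
  simp only [e_mk8_0, e_mk8_1, e_mk8_2, e_mk8_3, e_mk8_4, e_mk8_5, e_mk8_6, e_mk8_7, mk8_mul, neg_mk8, mk8_eq_mk8, v8_0, v8_1, v8_2, v8_3, v8_4, v8_5, v8_6, v8_7]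
  norm_num

lemma etab_3_3 : e 3 * e 3 = -e 0 := by
  simp only [e_mk8_0, e_mk8_1, e_mk8_2, e_mk8_3, e_mk8_4, e_mk8_5, e_mk8_6, e_mk8_7, mk8_mul, neg_mk8, mk8_eq_mk8, v8_0, v8_1, v8_2, v8_3, v8_4, v8_5, v8_6, v8_7]
  norm_num

lemma etab_3_4 : e 3 * e 4 = e 7 := by
  simp only [e_mk8_0, e_mk8_1, e_mk8_2, e_mk8_3, e_mk8_4, e_mk8_5, e_mk8_6, e_mk8_7, mk8_mul, neg_mk8, mk8_eq_mk8, v8_0, v8_1, v8_2, v8_3, v8_4, v8_5, v8_6, v8_7]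
  norm_num

lemma etab_3_5 : e 3 * e 5 = -e 6 := by
  simp only [e_mk8_0, e_mk8_1, e_mk8_2, e_mk8_3, e_mk8_4, e_mk8_5, e_mk8_6, e_mk8_7, mk8_mul, neg_mk8, mk8_eq_mk8, v8_0, v8_1, v8_2, v8_3, v8_4, v8_5, v8_6, v8_7]
  norm_num

lemma etab_3_6 : e 3 * e 6 = e 5 := by
  simp only [e_mk8_0, e_mk8_1, e_mk8_2, e_mk8_3, e_mk8_4, e_mk8_5, e_mk8_6, e_mk8_7, mk8_mul, neg_mk8, mk8_eq_mk8, v8_0, v8_1, v8_2, v8_3, v8_4, v8_5, v8_6, v8_7]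
  norm_num

lemma etab_3_7 : e 3 * e 7 = -e 4 := by
  simp only [e_mk8_0, e_mk8_1, e_mk8_2, e_mk8_3, e_mk8_4, e_mk8_5, e_mk8_6, e_mk8_7, mk8_mul, neg_mk8, mk8_eq_mk8, v8_0, v8_1, v8_2, v8_3, v8_4, v8_5, v8_6, v8_7]
  norm_num

lemma etab_4_0 : e 4 * e 0 = e 4 := by
  simp only [e_mk8_0, e_mk8_1, e_mk8_2, e_mk8_3, e_mk8_4, e_mk8_5, e_mk8_6, e_mk8_7, mk8_mul, neg_mk8, mk8_eq_mk8, v8_0, v8_1, v8_2, v8_3, v8_4, v8_5, v8_6, v8_7]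
  norm_num

lemma etab_4_1 : e 4 * e 1 = -e 5 := by
  simp only [e_mk8_0, e_mk8_1, e_mk8_2, e_mk8_3, e_mk8_4, e_mk8_5, e_mk8_6, e_mk8_7, mk8_mul, neg_mk8, mk8_eq_mk8, v8_0, v8_1, v8_2, v8_3, v8_4, v8_5, v8_6, v8_7]
  norm_num

lemma etab_4_2 : e 4 * e 2 = -e 6 := by
  simp only [e_mk8_0, e_mk8_1, e_mk8_2, e_mk8_3, e_mk8_4, e_mk8_5, e_mk8_6, e_mk8_7, mk8_mul, neg_mk8, mk8_eq_mk8, v8_0, v8_1, v8_2, v8_3, v8_4, v8_5, v8_6, v8_7]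
  norm_num

lemma etab_4_3 : e 4 * e 3 = -e 7 := by
  simp only [e_mk8_0, e_mk8_1, e_mk8_2, e_mk8_3, e_mk8_4, e_mk8_5, e_mk8_6, e_mk8_7, mk8_mul, neg_mk8, mk8_eq_mk8, v8_0, v8_1, v8_2, v8_3, v8_4, v8_5, v8_6, v8_7]
  norm_num

lemma etab_4_4 : e 4 * e 4 = -e 0 := by
  simp only [e_mk8_0, e_mk8_1, e_mk8_2, e_mk8_3, e_mk8_4, e_mk8_5, e_mk8_6, e_mk8_7, mk8_mul, neg_mk8, mk8_eq_mk8, v8_0, v8_1, v8_2, v8_3, v8_4, v8_5, v8_6, v8_7]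
  norm_num

lemma etab_4_5 : e 4 * e 5 = e 1 := by
  simp only [e_mk8_0, e_mk8_1, e_mk8_2, e_mk8_3, e_mk8_4, e_mk8_5, e_mk8_6, e_mk8_7, mk8_mul, neg_mk8, mk8_eq_mk8, v8_0, v8_1, v8_2, v8_3, v8_4, v8_5, v8_6, v8_7]
  norm_num

lemma etab_4_6 : e 4 * e 6 = e 2 := by
  simp only [e_mk8_0, e_mk8_1, e_mk8_2, e_mk8_3, e_mk8_4, e_mk8_5, e_mk8_6, e_mk8_7, mk8_mul, neg_mk8, mk8_eq_mk8, v8_0, v8_1, v8_2, v8_3, v8_4, v8_5, v8_6, v8_7]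
  norm_num

lemma etab_4_7 : e 4 * e 7 = e 3 := by
  simp only [e_mk8_0, e_mk8_1, e_mk8_2, e_mk8_3, e_mk8_4, e_mk8_5, e_mk8_6, e_mk8_7, mk8_mul, neg_mk8, mk8_eq_mk8, v8_0, v8_1, v8_2, v8_3, v8_4, v8_5, v8_6, v8_7]
  norm_num

lemma etab_5_0 : e 5 * e 0 = e 5 := by
  simp only [e_mk8_0, e_mk8_1, e_mk8_2, e_mk8_3, e_mk8_4, e_mk8_5, e_mk8_6, e_mk8_7, mk8_mul, neg_mk8, mk8_eq_mk8, v8_0, v8_1, v8_2, v8_3, v8_4, v8_5, v8_6, v8_7]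
  norm_num

lemma etab_5_1 : e 5 * e 1 = e 4 := by
  simp only [e_mk8_0, e_mk8_1, e_mk8_2, e_mk8_3, e_mk8_4, e_mk8_5, e_mk8_6, e_mk8_7, mk8_mul, neg_mk8, mk8_eq_mk8, v8_0, v8_1, v8_2, v8_3, v8_4, v8_5, v8_6, v8_7]
  norm_num

lemma etab_5_2 : e 5 * e 2 = -e 7 := by
  simp only [e_mk8_0, e_mk8_1, e_mk8_2, e_mk8_3, e_mk8_4, e_mk8_5, e_mk8_6, e_mk8_7, mk8_mul, neg_mk8, mk8_eq_mk8, v8_0, v8_1, v8_2, v8_3, v8_4, v8_5, v8_6, v8_7]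
  norm_num

lemma etab_5_3 : e 5 * e 3 = e 6 := by
  simp only [e_mk8_0, e_mk8_1, e_mk8_2, e_mk8_3, e_mk8_4, e_mk8_5, e_mk8_6, e_mk8_7, mk8_mul, neg_mk8, mk8_eq_mk8, v8_0, v8_1, v8_2, v8_3, v8_4, v8_5, v8_6, v8_7]
  norm_num

lemma etab_5_4 : e 5 * e 4 = -e 1 := by
  simp only [e_mk8_0, e_mk8_1, e_mk8_2, e_mk8_3, e_mk8_4, e_mk8_5, e_mk8_6, e_mk8_7, mk8_mul, neg_mk8, mk8_eq_mk8, v8_0, v8_1, v8_2, v8_3, v8_4, v8_5, v8_6, v8_7]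
  norm_num

lemma etab_5_5 : e 5 * e 5 = -e 0 := by
  simp only [e_mk8_0, e_mk8_1, e_mk8_2, e_mk8_3, e_mk8_4, e_mk8_5, e_mk8_6, e_mk8_7, mk8_mul, neg_mk8, mk8_eq_mk8, v8_0, v8_1, v8_2, v8_3, v8_4, v8_5, v8_6, v8_7]
  norm_num

lemma etab_5_6 : e 5 * e 6 = -e 3 := by
  simp only [e_mk8_0, e_mk8_1, e_mk8_2, e_mk8_3, e_mk8_4, e_mk8_5, e_mk8_6, e_mk8_7, mk8_mul, neg_mk8, mk8_eq_mk8, v8_0, v8_1, v8_2, v8_3, v8_4, v8_5, v8_6, v8_7]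
  norm_num

lemma etab_5_7 : e 5 * e 7 = e 2 := by
  simp only [e_mk8_0, e_mk8_1, e_mk8_2, e_mk8_3, e_mk8_4, e_mk8_5, e_mk8_6, e_mk8_7, mk8_mul, neg_mk8, mk8_eq_mk8, v8_0, v8_1, v8_2, v8_3, v8_4, v8_5, v8_6, v8_7]
  norm_num

lemma etab_6_0 : e 6 * e 0 = e 6 := by
  simp only [e_mk8_0, e_mk8_1, e_mk8_2, e_mk8_3, e_mk8_4, e_mk8_5, e_mk8_6, e_mk8_7, mk8_mul, neg_mk8, mk8_eq_mk8, v8_0, v8_1, v8_2, v8_3, v8_4, v8_5, v8_6, v8_7]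
  norm_num

lemma etab_6_1 : e 6 * e 1 = e 7 := by
  simp only [e_mk8_0, e_mk8_1, e_mk8_2, e_mk8_3, e_mk8_4, e_mk8_5, e_mk8_6, e_mk8_7, mk8_mul, neg_mk8, mk8_eq_mk8, v8_0, v8_1, v8_2, v8_3, v8_4, v8_5, v8_6, v8_7]
  norm_num

lemma etab_6_2 : e 6 * e 2 = e 4 := by
  simp only [e_mk8_0, e_mk8_1, e_mk8_2, e_mk8_3, e_mk8_4, e_mk8_5, e_mk8_6, e_mk8_7, mk8_mul, neg_mk8, mk8_eq_mk8, v8_0, v8_1, v8_2, v8_3, v8_4, v8_5, v8_6, v8_7]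
  norm_num

lemma etab_6_3 : e 6 * e 3 = -e 5 := by
  simp only [e_mk8_0, e_mk8_1, e_mk8_2, e_mk8_3, e_mk8_4, e_mk8_5, e_mk8_6, e_mk8_7, mk8_mul, neg_mk8, mk8_eq_mk8, v8_0, v8_1, v8_2, v8_3, v8_4, v8_5, v8_6, v8_7]
  norm_num

lemma etab_6_4 : e 6 * e 4 = -e 2 := by
  simp only [e_mk8_0, e_mk8_1, e_mk8_2, e_mk8_3, e_mk8_4, e_mk8_5, e_mk8_6, e_mk8_7, mk8_mul, neg_mk8, mk8_eq_mk8, v8_0, v8_1, v8_2, v8_3, v8_4, v8_5, v8_6, v8_7]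
  norm_num

lemma etab_6_5 : e 6 * e 5 = e 3 := by
  simp only [e_mk8_0, e_mk8_1, e_mk8_2, e_mk8_3, e_mk8_4, e_mk8_5, e_mk8_6, e_mk8_7, mk8_mul, neg_mk8, mk8_eq_mk8, v8_0, v8_1, v8_2, v8_3, v8_4, v8_5, v8_6, v8_7]
  norm_num

lemma etab_6_6 : e 6 * e 6 = -e 0 := by
  simp only [e_mk8_0, e_mk8_1, e_mk8_2, e_mk8_3, e_mk8_4, e_mk8_5, e_mk8_6, e_mk8_7, mk8_mul, neg_mk8, mk8_eq_mk8, v8_0, v8_1, v8_2, v8_3, v8_4, v8_5, v8_6, v8_7]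
  norm_num

lemma etab_6_7 : e 6 * e 7 = -e 1 := by
  simp only [e_mk8_0, e_mk8_1, e_mk8_2, e_mk8_3, e_mk8_4, e_mk8_5, e_mk8_6, e_mk8_7, mk8_mul, neg_mk8, mk8_eq_mk8, v8_0, v8_1, v8_2, v8_3, v8_4, v8_5, v8_6, v8_7]
  norm_num

lemma etab_7_0 : e 7 * e 0 = e 7 := by
  simp only [e_mk8_0, e_mk8_1, e_mk8_2, e_mk8_3, e_mk8_4, e_mk8_5, e_mk8_6, e_mk8_7, mk8_mul, neg_mk8, mk8_eq_mk8, v8_0, v8_1, v8_2, v8_3, v8_4, v8_5, v8_6, v8_7]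
  norm_num

lemma etab_7_1 : e 7 * e 1 = -e 6 := by
  simp only [e_mk8_0, e_mk8_1, e_mk8_2, e_mk8_3, e_mk8_4, e_mk8_5, e_mk8_6, e_mk8_7, mk8_mul, neg_mk8, mk8_eq_mk8, v8_0, v8_1, v8_2, v8_3, v8_4, v8_5, v8_6, v8_7]
  norm_num

lemma etab_7_2 : e 7 * e 2 = e 5 := by
  simp only [e_mk8_0, e_mk8_1, e_mk8_2, e_mk8_3, e_mk8_4, e_mk8_5, e_mk8_6, e_mk8_7, mk8_mul, neg_mk8, mk8_eq_mk8, v8_0, v8_1, v8_2, v8_3, v8_4, v8_5, v8_6, v8_7]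
  norm_num

lemma etab_7_3 : e 7 * e 3 = e 4 := by
  simp only [e_mk8_0, e_mk8_1, e_mk8_2, e_mk8_3, e_mk8_4, e_mk8_5, e_mk8_6, e_mk8_7, mk8_mul, neg_mk8, mk8_eq_mk8, v8_0, v8_1, v8_2, v8_3, v8_4, v8_5, v8_6, v8_7]
  norm_num

lemma etab_7_4 : e 7 * e 4 = -e 3 := by
  simp only [e_mk8_0, e_mk8_1, e_mk8_2, e_mk8_3, e_mk8_4, e_mk8_5, e_mk8_6, e_mk8_7, mk8_mul, neg_mk8, mk8_eq_mk8, v8_0, v8_1, v8_2, v8_3, v8_4, v8_5, v8_6, v8_7]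
  norm_num

lemma etab_7_5 : e 7 * e 5 = -e 2 := by
  simp only [e_mk8_0, e_mk8_1, e_mk8_2, e_mk8_3, e_mk8_4, e_mk8_5, e_mk8_6, e_mk8_7, mk8_mul, neg_mk8, mk8_eq_mk8, v8_0, v8_1, v8_2, v8_3, v8_4, v8_5, v8_6, v8_7]
  norm_num

lemma etab_7_6 : e 7 * e 6 = e 1 := by
  simp only [e_mk8_0, e_mk8_1, e_mk8_2, e_mk8_3, e_mk8_4, e_mk8_5, e_mk8_6, e_mk8_7, mk8_mul, neg_mk8, mk8_eq_mk8, v8_0, v8_1, v8_2, v8_3, v8_4, v8_5, v8_6, v8_7]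
  norm_num

lemma etab_7_7 : e 7 * e 7 = -e 0 := by
  simp only [e_mk8_0, e_mk8_1, e_mk8_2, e_mk8_3, e_mk8_4, e_mk8_5, e_mk8_6, e_mk8_7, mk8_mul, neg_mk8, mk8_eq_mk8, v8_0, v8_1, v8_2, v8_3, v8_4, v8_5, v8_6, v8_7]
  norm_num


lemma mul_add_o (a b c : Octonion) : a * (b + c) = a * b + a * c := by
  conv_lhs => rw [← mk8_coord a, ← mk8_coord b, ← mk8_coord c]
  conv_rhs => rw [← mk8_coord a, ← mk8_coord b, ← mk8_coord c]
  simp only [add_mk8, mk8_mul, mk8_eq_mk8, v8_0, v8_1, v8_2, v8_3, v8_4, v8_5, v8_6, v8_7]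
  refine ⟨?_,?_,?_,?_,?_,?_,?_,?_⟩ <;> ring

lemma add_mul_o (a b c : Octonion) : (a + b) * c = a * c + b * c := by
  conv_lhs => rw [← mk8_coord a, ← mk8_coord b, ← mk8_coord c]
  conv_rhs => rw [← mk8_coord a, ← mk8_coord b, ← mk8_coord c]
  simp only [add_mk8, mk8_mul, mk8_eq_mk8, v8_0, v8_1, v8_2, v8_3, v8_4, v8_5, v8_6, v8_7]
  refine ⟨?_,?_,?_,?_,?_,?_,?_,?_⟩ <;> ring

lemma mul_smul_o (r : ℝ) (a b : Octonion) : a * (r • b) = r • (a * b) := by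
  conv_lhs => rw [← mk8_coord a, ← mk8_coord b]
  conv_rhs => rw [← mk8_coord a, ← mk8_coord b]
  simp only [smul_mk8, mk8_mul, mk8_eq_mk8, v8_0, v8_1, v8_2, v8_3, v8_4, v8_5, v8_6, v8_7]
  refine ⟨?_,?_,?_,?_,?_,?_,?_,?_⟩ <;> ring

lemma smul_mul_o (r : ℝ) (a b : Octonion) : (r • a) * b = r • (a * b) := by
  conv_lhs => rw [← mk8_coord a, ← mk8_coord b]
  conv_rhs => rw [← mk8_coord a, ← mk8_coord b]
  simp only [smul_mk8, mk8_mul, mk8_eq_mk8, v8_0, v8_1, v8_2, v8_3, v8_4, v8_5, v8_6, v8_7]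
  refine ⟨?_,?_,?_,?_,?_,?_,?_,?_⟩ <;> ring

lemma sum_smul_e (a : Fin 8 → ℝ) : (∑ j : Fin 8, a j • e j) = mk8 a := by
  simp only [Fin.sum_univ_eight, e_mk8_0, e_mk8_1, e_mk8_2, e_mk8_3, e_mk8_4, e_mk8_5,
    e_mk8_6, e_mk8_7, smul_mk8, add_mk8, mk8_eq_mk8, v8_0, v8_1, v8_2, v8_3, v8_4, v8_5, v8_6, v8_7]
  refine ⟨?_,?_,?_,?_,?_,?_,?_,?_⟩ <;> ring

lemma coord_expand (x : Octonion) : x = ∑ j : Fin 8, coord x j • e j := by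
  rw [sum_smul_e, mk8_coord]

instance : FiniteDimensional ℝ Octonion :=
  inferInstanceAs (FiniteDimensional ℝ (Quaternion ℝ × Quaternion ℝ))

def lmul (a : Octonion) : Octonion →L[ℝ] Octonion :=
  LinearMap.toContinuousLinearMap
    { toFun := fun x => a * x
      map_add' := mul_add_o a
      map_smul' := fun r x => mul_smul_o r a x }

lemma lmul_apply (a x : Octonion) : lmul a x = a * x := rfl

lemma fderiv_comp_lmul (f : Octonion → Octonion) (hf : Differentiable ℝ f)
    (α x v : Octonion) :
    fderiv ℝ (fun y => f (α * y)) x v = fderiv ℝ f (α * x) (α * v) := by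
  have h1 : (fun y => f (α * y)) = f ∘ (lmul α) := rfl
  rw [h1, fderiv_comp x (hf _) (lmul α).differentiableAt, (lmul α).fderiv]
  rfl

lemma one_mul_o (x : Octonion) : e 0 * x = x := by
  conv_lhs => rw [← mk8_coord x]
  conv_rhs => rw [← mk8_coord x]
  simp only [e_mk8_0, mk8_mul, mk8_eq_mk8, v8_0, v8_1, v8_2, v8_3, v8_4, v8_5, v8_6, v8_7]
  refine ⟨?_,?_,?_,?_,?_,?_,?_,?_⟩ <;> ring

lemma esq_1 (x : Octonion) : e 1 * (e 1 * x) = -x := by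
  conv_lhs => rw [← mk8_coord x]
  conv_rhs => rw [← mk8_coord x]
  simp only [e_mk8_1, mk8_mul, neg_mk8, mk8_eq_mk8, v8_0, v8_1, v8_2, v8_3, v8_4, v8_5, v8_6, v8_7]
  refine ⟨?_,?_,?_,?_,?_,?_,?_,?_⟩ <;> ring

lemma esq_2 (x : Octonion) : e 2 * (e 2 * x) = -x := by
  conv_lhs => rw [← mk8_coord x]
  conv_rhs => rw [← mk8_coord x]
  simp only [e_mk8_2, mk8_mul, neg_mk8, mk8_eq_mk8, v8_0, v8_1, v8_2, v8_3, v8_4, v8_5, v8_6, v8_7]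
  refine ⟨?_,?_,?_,?_,?_,?_,?_,?_⟩ <;> ring

lemma esq_3 (x : Octonion) : e 3 * (e 3 * x) = -x := by
  conv_lhs => rw [← mk8_coord x]
  conv_rhs => rw [← mk8_coord x]
  simp only [e_mk8_3, mk8_mul, neg_mk8, mk8_eq_mk8, v8_0, v8_1, v8_2, v8_3, v8_4, v8_5, v8_6, v8_7]
  refine ⟨?_,?_,?_,?_,?_,?_,?_,?_⟩ <;> ring

lemma esq_4 (x : Octonion) : e 4 * (e 4 * x) = -x := by
  conv_lhs => rw [← mk8_coord x]
  conv_rhs => rw [← mk8_coord x]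
  simp only [e_mk8_4, mk8_mul, neg_mk8, mk8_eq_mk8, v8_0, v8_1, v8_2, v8_3, v8_4, v8_5, v8_6, v8_7]
  refine ⟨?_,?_,?_,?_,?_,?_,?_,?_⟩ <;> ring

lemma esq_5 (x : Octonion) : e 5 * (e 5 * x) = -x := by
  conv_lhs => rw [← mk8_coord x]
  conv_rhs => rw [← mk8_coord x]
  simp only [e_mk8_5, mk8_mul, neg_mk8, mk8_eq_mk8, v8_0, v8_1, v8_2, v8_3, v8_4, v8_5, v8_6, v8_7]
  refine ⟨?_,?_,?_,?_,?_,?_,?_,?_⟩ <;> ring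

lemma esq_6 (x : Octonion) : e 6 * (e 6 * x) = -x := by
  conv_lhs => rw [← mk8_coord x]
  conv_rhs => rw [← mk8_coord x]
  simp only [e_mk8_6, mk8_mul, neg_mk8, mk8_eq_mk8, v8_0, v8_1, v8_2, v8_3, v8_4, v8_5, v8_6, v8_7]
  refine ⟨?_,?_,?_,?_,?_,?_,?_,?_⟩ <;> ring

lemma esq_7 (x : Octonion) : e 7 * (e 7 * x) = -x := by
  conv_lhs => rw [← mk8_coord x]
  conv_rhs => rw [← mk8_coord x]
  simp only [e_mk8_7, mk8_mul, neg_mk8, mk8_eq_mk8, v8_0, v8_1, v8_2, v8_3, v8_4, v8_5, v8_6, v8_7]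
  refine ⟨?_,?_,?_,?_,?_,?_,?_,?_⟩ <;> ring


set_option maxHeartbeats 0 in
lemma key (L : Octonion →L[ℝ] Octonion) :
    (∀ j : Fin 8, ∑ i : Fin 8, e i * L (e j * e i) = 0) ↔
    (coord (L (e 0)) 0 = ∑ i ∈ Finset.univ.erase (0 : Fin 8), coord (L (e i)) i ∧
     (∀ i : Fin 8, i ≠ 0 → coord (L (e i)) 0 = -coord (L (e 0)) i) ∧
     (∀ j k : Fin 8, j ≠ 0 → k ≠ 0 → coord (L (e k)) j = coord (L (e j)) k)) := by
  obtain ⟨c, hc⟩ : ∃ c : Fin 8 → Fin 8 → ℝ, ∀ k, L (e k) = mk8 (c k) :=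
    ⟨fun k => coord (L (e k)), fun k => (mk8_coord _).symm⟩
  have herase : ∑ i ∈ Finset.univ.erase (0 : Fin 8), coord (L (e i)) i
      = c 1 1 + c 2 2 + c 3 3 + c 4 4 + c 5 5 + c 6 6 + c 7 7 := by
    rw [show (Finset.univ.erase (0 : Fin 8)) = ({1,2,3,4,5,6,7} : Finset (Fin 8)) from by decide]
    rw [Finset.sum_insert (by decide), Finset.sum_insert (by decide),
      Finset.sum_insert (by decide), Finset.sum_insert (by decide),
      Finset.sum_insert (by decide), Finset.sum_insert (by decide), Finset.sum_singleton]
    simp only [hc, coord_mk8, v8_0, v8_1, v8_2, v8_3, v8_4, v8_5, v8_6, v8_7]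
    ring
  constructor
  · intro H
    have H0 := H 0
    have H1 := H 1
    have H2 := H 2
    have H3 := H 3
    have H4 := H 4
    have H5 := H 5
    have H6 := H 6
    have H7 := H 7
    simp only [Fin.sum_univ_eight, etab_0_0, etab_0_1, etab_0_2, etab_0_3, etab_0_4, etab_0_5, etab_0_6, etab_0_7] at H0
    simp only [map_neg, hc] at H0
    simp only [neg_mk8, e_mk8_0, e_mk8_1, e_mk8_2, e_mk8_3, e_mk8_4, e_mk8_5, e_mk8_6, e_mk8_7, mk8_mul, add_mk8, mk8_eq_zero, zero_mul, one_mul, mul_zero, mul_one, mul_neg, neg_mul, neg_zero, neg_neg, add_zero, zero_add, sub_zero, zero_sub, v8_0, v8_1, v8_2, v8_3, v8_4, v8_5, v8_6, v8_7] at H0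
    simp only [Fin.sum_univ_eight, etab_1_0, etab_1_1, etab_1_2, etab_1_3, etab_1_4, etab_1_5, etab_1_6, etab_1_7] at H1
    simp only [map_neg, hc] at H1
    simp only [neg_mk8, e_mk8_0, e_mk8_1, e_mk8_2, e_mk8_3, e_mk8_4, e_mk8_5, e_mk8_6, e_mk8_7, mk8_mul, add_mk8, mk8_eq_zero, zero_mul, one_mul, mul_zero, mul_one, mul_neg, neg_mul, neg_zero, neg_neg, add_zero, zero_add, sub_zero, zero_sub, v8_0, v8_1, v8_2, v8_3, v8_4, v8_5, v8_6, v8_7] at H1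
    simp only [Fin.sum_univ_eight, etab_2_0, etab_2_1, etab_2_2, etab_2_3, etab_2_4, etab_2_5, etab_2_6, etab_2_7] at H2
    simp only [map_neg, hc] at H2
    simp only [neg_mk8, e_mk8_0, e_mk8_1, e_mk8_2, e_mk8_3, e_mk8_4, e_mk8_5, e_mk8_6, e_mk8_7, mk8_mul, add_mk8, mk8_eq_zero, zero_mul, one_mul, mul_zero, mul_one, mul_neg, neg_mul, neg_zero, neg_neg, add_zero, zero_add, sub_zero, zero_sub, v8_0, v8_1, v8_2, v8_3, v8_4, v8_5, v8_6, v8_7] at H2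
    simp only [Fin.sum_univ_eight, etab_3_0, etab_3_1, etab_3_2, etab_3_3, etab_3_4, etab_3_5, etab_3_6, etab_3_7] at H3
    simp only [map_neg, hc] at H3
    simp only [neg_mk8, e_mk8_0, e_mk8_1, e_mk8_2, e_mk8_3, e_mk8_4, e_mk8_5, e_mk8_6, e_mk8_7, mk8_mul, add_mk8, mk8_eq_zero, zero_mul, one_mul, mul_zero, mul_one, mul_neg, neg_mul, neg_zero, neg_neg, add_zero, zero_add, sub_zero, zero_sub, v8_0, v8_1, v8_2, v8_3, v8_4, v8_5, v8_6, v8_7] at H3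
    simp only [Fin.sum_univ_eight, etab_4_0, etab_4_1, etab_4_2, etab_4_3, etab_4_4, etab_4_5, etab_4_6, etab_4_7] at H4
    simp only [map_neg, hc] at H4
    simp only [neg_mk8, e_mk8_0, e_mk8_1, e_mk8_2, e_mk8_3, e_mk8_4, e_mk8_5, e_mk8_6, e_mk8_7, mk8_mul, add_mk8, mk8_eq_zero, zero_mul, one_mul, mul_zero, mul_one, mul_neg, neg_mul, neg_zero, neg_neg, add_zero, zero_add, sub_zero, zero_sub, v8_0, v8_1, v8_2, v8_3, v8_4, v8_5, v8_6, v8_7] at H4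
    simp only [Fin.sum_univ_eight, etab_5_0, etab_5_1, etab_5_2, etab_5_3, etab_5_4, etab_5_5, etab_5_6, etab_5_7] at H5
    simp only [map_neg, hc] at H5
    simp only [neg_mk8, e_mk8_0, e_mk8_1, e_mk8_2, e_mk8_3, e_mk8_4, e_mk8_5, e_mk8_6, e_mk8_7, mk8_mul, add_mk8, mk8_eq_zero, zero_mul, one_mul, mul_zero, mul_one, mul_neg, neg_mul, neg_zero, neg_neg, add_zero, zero_add, sub_zero, zero_sub, v8_0, v8_1, v8_2, v8_3, v8_4, v8_5, v8_6, v8_7] at H5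
    simp only [Fin.sum_univ_eight, etab_6_0, etab_6_1, etab_6_2, etab_6_3, etab_6_4, etab_6_5, etab_6_6, etab_6_7] at H6
    simp only [map_neg, hc] at H6
    simp only [neg_mk8, e_mk8_0, e_mk8_1, e_mk8_2, e_mk8_3, e_mk8_4, e_mk8_5, e_mk8_6, e_mk8_7, mk8_mul, add_mk8, mk8_eq_zero, zero_mul, one_mul, mul_zero, mul_one, mul_neg, neg_mul, neg_zero, neg_neg, add_zero, zero_add, sub_zero, zero_sub, v8_0, v8_1, v8_2, v8_3, v8_4, v8_5, v8_6, v8_7] at H6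
    simp only [Fin.sum_univ_eight, etab_7_0, etab_7_1, etab_7_2, etab_7_3, etab_7_4, etab_7_5, etab_7_6, etab_7_7] at H7
    simp only [map_neg, hc] at H7
    simp only [neg_mk8, e_mk8_0, e_mk8_1, e_mk8_2, e_mk8_3, e_mk8_4, e_mk8_5, e_mk8_6, e_mk8_7, mk8_mul, add_mk8, mk8_eq_zero, zero_mul, one_mul, mul_zero, mul_one, mul_neg, neg_mul, neg_zero, neg_neg, add_zero, zero_add, sub_zero, zero_sub, v8_0, v8_1, v8_2, v8_3, v8_4, v8_5, v8_6, v8_7] at H7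
    obtain ⟨h00,h01,h02,h03,h04,h05,h06,h07⟩ := H0
    obtain ⟨h10,h11,h12,h13,h14,h15,h16,h17⟩ := H1
    obtain ⟨h20,h21,h22,h23,h24,h25,h26,h27⟩ := H2
    obtain ⟨h30,h31,h32,h33,h34,h35,h36,h37⟩ := H3
    obtain ⟨h40,h41,h42,h43,h44,h45,h46,h47⟩ := H4
    obtain ⟨h50,h51,h52,h53,h54,h55,h56,h57⟩ := H5
    obtain ⟨h60,h61,h62,h63,h64,h65,h66,h67⟩ := H6
    obtain ⟨h70,h71,h72,h73,h74,h75,h76,h77⟩ := H7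
    refine ⟨?_, ?_, ?_⟩
    · rw [herase]
      simp only [hc, coord_mk8, v8_0, v8_1, v8_2, v8_3, v8_4, v8_5, v8_6, v8_7]
      linarith
    · intro i hi
      fin_cases i
      · exact absurd rfl hi
      all_goals simp only [fmk0, fmk1, fmk2, fmk3, fmk4, fmk5, fmk6, fmk7, hc, coord_mk8, v8_0, v8_1, v8_2, v8_3, v8_4, v8_5, v8_6, v8_7]
      all_goals linarith
    · intro j k hj hk
      fin_cases j <;> fin_cases k <;>
        first
        | exact absurd rfl hj
        | exact absurd rfl hk
        | (simp only [fmk0, fmk1, fmk2, fmk3, fmk4, fmk5, fmk6, fmk7, hc, coord_mk8, v8_0, v8_1, v8_2, v8_3, v8_4, v8_5, v8_6, v8_7]; try linarith)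
  · rintro ⟨h1, h2, h3⟩
    rw [herase] at h1
    simp only [hc, coord_mk8, v8_0, v8_1, v8_2, v8_3, v8_4, v8_5, v8_6, v8_7] at h1
    have q1 := h2 1 (by decide)
    have q2 := h2 2 (by decide)
    have q3 := h2 3 (by decide)
    have q4 := h2 4 (by decide)
    have q5 := h2 5 (by decide)
    have q6 := h2 6 (by decide)
    have q7 := h2 7 (by decide)
    have s12 := h3 1 2 (by decide) (by decide)
    have s13 := h3 1 3 (by decide) (by decide)
    have s14 := h3 1 4 (by decide) (by decide)
    have s15 := h3 1 5 (by decide) (by decide)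
    have s16 := h3 1 6 (by decide) (by decide)
    have s17 := h3 1 7 (by decide) (by decide)
    have s23 := h3 2 3 (by decide) (by decide)
    have s24 := h3 2 4 (by decide) (by decide)
    have s25 := h3 2 5 (by decide) (by decide)
    have s26 := h3 2 6 (by decide) (by decide)
    have s27 := h3 2 7 (by decide) (by decide)
    have s34 := h3 3 4 (by decide) (by decide)
    have s35 := h3 3 5 (by decide) (by decide)
    have s36 := h3 3 6 (by decide) (by decide)
    have s37 := h3 3 7 (by decide) (by decide)
    have s45 := h3 4 5 (by decide) (by decide)
    have s46 := h3 4 6 (by decide) (by decide)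
    have s47 := h3 4 7 (by decide) (by decide)
    have s56 := h3 5 6 (by decide) (by decide)
    have s57 := h3 5 7 (by decide) (by decide)
    have s67 := h3 6 7 (by decide) (by decide)
    simp only [hc, coord_mk8, v8_0, v8_1, v8_2, v8_3, v8_4, v8_5, v8_6, v8_7] at q1 q2 q3 q4 q5 q6 q7 s12 s13 s14 s15 s16 s17 s23 s24 s25 s26 s27 s34 s35 s36 s37 s45 s46 s47 s56 s57 s67
    intro j
    fin_cases j
    · simp only [fmk0, fmk1, fmk2, fmk3, fmk4, fmk5, fmk6, fmk7, Fin.sum_univ_eight, etab_0_0, etab_0_1, etab_0_2, etab_0_3, etab_0_4, etab_0_5, etab_0_6, etab_0_7]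
      simp only [map_neg, hc]
      simp only [neg_mk8, e_mk8_0, e_mk8_1, e_mk8_2, e_mk8_3, e_mk8_4, e_mk8_5, e_mk8_6, e_mk8_7, mk8_mul, add_mk8, mk8_eq_zero, zero_mul, one_mul, mul_zero, mul_one, mul_neg, neg_mul, neg_zero, neg_neg, add_zero, zero_add, sub_zero, zero_sub, v8_0, v8_1, v8_2, v8_3, v8_4, v8_5, v8_6, v8_7]
      refine ⟨?_,?_,?_,?_,?_,?_,?_,?_⟩ <;> linarith
    · simp only [fmk0, fmk1, fmk2, fmk3, fmk4, fmk5, fmk6, fmk7, Fin.sum_univ_eight, etab_1_0, etab_1_1, etab_1_2, etab_1_3, etab_1_4, etab_1_5, etab_1_6, etab_1_7]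
      simp only [map_neg, hc]
      simp only [neg_mk8, e_mk8_0, e_mk8_1, e_mk8_2, e_mk8_3, e_mk8_4, e_mk8_5, e_mk8_6, e_mk8_7, mk8_mul, add_mk8, mk8_eq_zero, zero_mul, one_mul, mul_zero, mul_one, mul_neg, neg_mul, neg_zero, neg_neg, add_zero, zero_add, sub_zero, zero_sub, v8_0, v8_1, v8_2, v8_3, v8_4, v8_5, v8_6, v8_7]
      refine ⟨?_,?_,?_,?_,?_,?_,?_,?_⟩ <;> linarith
    · simp only [fmk0, fmk1, fmk2, fmk3, fmk4, fmk5, fmk6, fmk7, Fin.sum_univ_eight, etab_2_0, etab_2_1, etab_2_2, etab_2_3, etab_2_4, etab_2_5, etab_2_6, etab_2_7]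
      simp only [map_neg, hc]
      simp only [neg_mk8, e_mk8_0, e_mk8_1, e_mk8_2, e_mk8_3, e_mk8_4, e_mk8_5, e_mk8_6, e_mk8_7, mk8_mul, add_mk8, mk8_eq_zero, zero_mul, one_mul, mul_zero, mul_one, mul_neg, neg_mul, neg_zero, neg_neg, add_zero, zero_add, sub_zero, zero_sub, v8_0, v8_1, v8_2, v8_3, v8_4, v8_5, v8_6, v8_7]
      refine ⟨?_,?_,?_,?_,?_,?_,?_,?_⟩ <;> linarith
    · simp only [fmk0, fmk1, fmk2, fmk3, fmk4, fmk5, fmk6, fmk7, Fin.sum_univ_eight, etab_3_0, etab_3_1, etab_3_2, etab_3_3, etab_3_4, etab_3_5, etab_3_6, etab_3_7]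
      simp only [map_neg, hc]
      simp only [neg_mk8, e_mk8_0, e_mk8_1, e_mk8_2, e_mk8_3, e_mk8_4, e_mk8_5, e_mk8_6, e_mk8_7, mk8_mul, add_mk8, mk8_eq_zero, zero_mul, one_mul, mul_zero, mul_one, mul_neg, neg_mul, neg_zero, neg_neg, add_zero, zero_add, sub_zero, zero_sub, v8_0, v8_1, v8_2, v8_3, v8_4, v8_5, v8_6, v8_7]
      refine ⟨?_,?_,?_,?_,?_,?_,?_,?_⟩ <;> linarith
    · simp only [fmk0, fmk1, fmk2, fmk3, fmk4, fmk5, fmk6, fmk7, Fin.sum_univ_eight, etab_4_0, etab_4_1, etab_4_2, etab_4_3, etab_4_4, etab_4_5, etab_4_6, etab_4_7]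
      simp only [map_neg, hc]
      simp only [neg_mk8, e_mk8_0, e_mk8_1, e_mk8_2, e_mk8_3, e_mk8_4, e_mk8_5, e_mk8_6, e_mk8_7, mk8_mul, add_mk8, mk8_eq_zero, zero_mul, one_mul, mul_zero, mul_one, mul_neg, neg_mul, neg_zero, neg_neg, add_zero, zero_add, sub_zero, zero_sub, v8_0, v8_1, v8_2, v8_3, v8_4, v8_5, v8_6, v8_7]
      refine ⟨?_,?_,?_,?_,?_,?_,?_,?_⟩ <;> linarith
    · simp only [fmk0, fmk1, fmk2, fmk3, fmk4, fmk5, fmk6, fmk7, Fin.sum_univ_eight, etab_5_0, etab_5_1, etab_5_2, etab_5_3, etab_5_4, etab_5_5, etab_5_6, etab_5_7]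
      simp only [map_neg, hc]
      simp only [neg_mk8, e_mk8_0, e_mk8_1, e_mk8_2, e_mk8_3, e_mk8_4, e_mk8_5, e_mk8_6, e_mk8_7, mk8_mul, add_mk8, mk8_eq_zero, zero_mul, one_mul, mul_zero, mul_one, mul_neg, neg_mul, neg_zero, neg_neg, add_zero, zero_add, sub_zero, zero_sub, v8_0, v8_1, v8_2, v8_3, v8_4, v8_5, v8_6, v8_7]
      refine ⟨?_,?_,?_,?_,?_,?_,?_,?_⟩ <;> linarith
    · simp only [fmk0, fmk1, fmk2, fmk3, fmk4, fmk5, fmk6, fmk7, Fin.sum_univ_eight, etab_6_0, etab_6_1, etab_6_2, etab_6_3, etab_6_4, etab_6_5, etab_6_6, etab_6_7]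
      simp only [map_neg, hc]
      simp only [neg_mk8, e_mk8_0, e_mk8_1, e_mk8_2, e_mk8_3, e_mk8_4, e_mk8_5, e_mk8_6, e_mk8_7, mk8_mul, add_mk8, mk8_eq_zero, zero_mul, one_mul, mul_zero, mul_one, mul_neg, neg_mul, neg_zero, neg_neg, add_zero, zero_add, sub_zero, zero_sub, v8_0, v8_1, v8_2, v8_3, v8_4, v8_5, v8_6, v8_7]
      refine ⟨?_,?_,?_,?_,?_,?_,?_,?_⟩ <;> linarith
    · simp only [fmk0, fmk1, fmk2, fmk3, fmk4, fmk5, fmk6, fmk7, Fin.sum_univ_eight, etab_7_0, etab_7_1, etab_7_2, etab_7_3, etab_7_4, etab_7_5, etab_7_6, etab_7_7]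
      simp only [map_neg, hc]
      simp only [neg_mk8, e_mk8_0, e_mk8_1, e_mk8_2, e_mk8_3, e_mk8_4, e_mk8_5, e_mk8_6, e_mk8_7, mk8_mul, add_mk8, mk8_eq_zero, zero_mul, one_mul, mul_zero, mul_one, mul_neg, neg_mul, neg_zero, neg_neg, add_zero, zero_add, sub_zero, zero_sub, v8_0, v8_1, v8_2, v8_3, v8_4, v8_5, v8_6, v8_7]
      refine ⟨?_,?_,?_,?_,?_,?_,?_,?_⟩ <;> linarith


lemma mul_neg_o (a b : Octonion) : a * (-b) = -(a * b) := by
  conv_lhs => rw [← mk8_coord a, ← mk8_coord b]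
  conv_rhs => rw [← mk8_coord a, ← mk8_coord b]
  simp only [neg_mk8, mk8_mul, mk8_eq_mk8, v8_0, v8_1, v8_2, v8_3, v8_4, v8_5, v8_6, v8_7]
  refine ⟨?_,?_,?_,?_,?_,?_,?_,?_⟩ <;> ring


/-- Proposition 4.7: for a differentiable `f : ℝ⁸ = 𝕆 → 𝕆` with components
`fⱼ = coord j ∘ f`, the function `x ↦ f(αx)` is left 𝕆-analytic for every octonion
constant `α` if and only if the components satisfy `∂f₀/∂x₀ = Σᵢ₌₁⁷ ∂fᵢ/∂xᵢ`,
`∂f₀/∂xᵢ = −∂fᵢ/∂x₀` (`1 ≤ i ≤ 7`) and `∂fⱼ/∂x_k = ∂f_k/∂xⱼ` (`1 ≤ j,k ≤ 7`),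
i.e. the components of `f̄` form a Stein–Weiss conjugate harmonic system on ℝ⁸.
Here `∂fⱼ/∂xᵢ = coord j (fderiv ℝ f x (e i))`. -/
theorem leftAnalytic_comp_iff_steinWeiss (f : Octonion → Octonion)
    (hf : Differentiable ℝ f) :
    (∀ α : Octonion, ∀ x : Octonion,
        (∑ i : Fin 8, e i * fderiv ℝ (fun y => f (α * y)) x (e i)) = 0) ↔
    (∀ x : Octonion,
        coord (fderiv ℝ f x (e 0)) 0 =
          (∑ i ∈ Finset.univ.erase (0 : Fin 8), coord (fderiv ℝ f x (e i)) i) ∧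
        (∀ i : Fin 8, i ≠ 0 →
          coord (fderiv ℝ f x (e i)) 0 = -coord (fderiv ℝ f x (e 0)) i) ∧
        (∀ j k : Fin 8, j ≠ 0 → k ≠ 0 →
          coord (fderiv ℝ f x (e k)) j = coord (fderiv ℝ f x (e j)) k)) := by
  constructor
  · intro H x
    refine (key (fderiv ℝ f x)).mp ?_
    intro j
    fin_cases j
    · have h := H (e 0) x
      simp only [fderiv_comp_lmul f hf, one_mul_o] at h
      simp only [fmk0, one_mul_o]
      exact h
    · have h := H (e 1) (-(e 1 * x))
      simp only [fderiv_comp_lmul f hf, mul_neg_o, esq_1, neg_neg] at h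
      simp only [fmk1]
      exact h
    · have h := H (e 2) (-(e 2 * x))
      simp only [fderiv_comp_lmul f hf, mul_neg_o, esq_2, neg_neg] at h
      simp only [fmk2]
      exact h
    · have h := H (e 3) (-(e 3 * x))
      simp only [fderiv_comp_lmul f hf, mul_neg_o, esq_3, neg_neg] at h
      simp only [fmk3]
      exact h
    · have h := H (e 4) (-(e 4 * x))
      simp only [fderiv_comp_lmul f hf, mul_neg_o, esq_4, neg_neg] at h
      simp only [fmk4]
      exact h
    · have h := H (e 5) (-(e 5 * x))
      simp only [fderiv_comp_lmul f hf, mul_neg_o, esq_5, neg_neg] at h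
      simp only [fmk5]
      exact h
    · have h := H (e 6) (-(e 6 * x))
      simp only [fderiv_comp_lmul f hf, mul_neg_o, esq_6, neg_neg] at h
      simp only [fmk6]
      exact h
    · have h := H (e 7) (-(e 7 * x))
      simp only [fderiv_comp_lmul f hf, mul_neg_o, esq_7, neg_neg] at h
      simp only [fmk7]
      exact h
  · intro H α x
    have hk := (key (fderiv ℝ f (α * x))).mpr (H (α * x))
    have hα : ∀ v : Octonion, α * v = ∑ j : Fin 8, coord α j • (e j * v) := by
      intro v
      conv_lhs => rw [coord_expand α]
      rw [Fin.sum_univ_eight, Fin.sum_univ_eight]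
      simp only [add_mul_o, smul_mul_o]
    have expand_i : ∀ i : Fin 8, e i * (fderiv ℝ f (α * x)) (α * e i)
        = ∑ j : Fin 8, coord α j • (e i * (fderiv ℝ f (α * x)) (e j * e i)) := by
      intro i
      rw [hα (e i), map_sum, Fin.sum_univ_eight, Fin.sum_univ_eight]
      simp only [map_smul, mul_add_o, mul_smul_o]
    calc ∑ i : Fin 8, e i * fderiv ℝ (fun y => f (α * y)) x (e i)
        = ∑ i : Fin 8, e i * (fderiv ℝ f (α * x)) (α * e i) := by
          simp only [fderiv_comp_lmul f hf]
      _ = ∑ i : Fin 8, ∑ j : Fin 8, coord α j • (e i * (fderiv ℝ f (α * x)) (e j * e i)) := by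
          simp only [expand_i]
      _ = ∑ j : Fin 8, coord α j • ∑ i : Fin 8, e i * (fderiv ℝ f (α * x)) (e j * e i) := by
          rw [Finset.sum_comm]
          simp only [Finset.smul_sum]
      _ = 0 := by simp only [hk, smul_zero, Finset.sum_const_zero]

end Octonion
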